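/- Let (X,*) be a topological group with identity x₀, metrized by d, with a dilation family {T_α}_{α∈[0,∞)} on (X,d,x₀) consisting of group homomorphisms, and assume the left translations are equicontinuous with respect to d. Let D(x,y) = sup{ d(c*x,c*y) : c ∈ X } and define ‖x‖ := D(x,x₀). Then ‖·‖ is a group norm: ‖x⁻¹‖ = ‖x‖ and ‖x*y‖ ≤ ‖x‖ + ‖y‖ for all x,y ∈ X, and moreover ‖T_α(x)‖ = α·‖x‖ for all α ≥ 0 and x ∈ X (homogeneity). -/

import Mathlib

open Filter Topology Set

/-- A dilation family on `(X, d, x₀)` indexed by a multiplicatively closed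
set `I ⊆ ℝ≥0`. -/
def IsDilationFamily {X : Type*} [MetricSpace X] (I : Set ℝ) (T : ℝ → X → X) (x₀ : X) : Prop :=
  I ⊆ Set.Ici 0 ∧
  (∀ α ∈ I, ∀ β ∈ I, α * β ∈ I) ∧
  (∀ α ∈ I, ∀ x y : X, dist (T α x) (T α y) = α * dist x y) ∧
  (∀ α ∈ I, T α x₀ = x₀) ∧
  (∀ α ∈ I, ∀ β ∈ I, ∀ x : X, T α (T β x) = T (α * β) x) ∧
  (∀ x : X, ∃ L : X, Tendsto (fun α => T α x) (𝓝[I] 1) (𝓝 L))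

/-- `D(x,y) = sup { d(c*x, c*y) : c ∈ X }`. -/
noncomputable def transDist {X : Type*} [Group X] [MetricSpace X] (x y : X) : ℝ :=
  ⨆ c : X, dist (c * x) (c * y)

private lemma iSup_comp_surj {X : Type*} [Nonempty X] {f : X → X}
    (hf : Function.Surjective f) (g : X → ℝ) : ⨆ c, g (f c) = ⨆ c, g c := by
  have h : Set.range (g ∘ f) = Set.range g := hf.range_comp g
  simp only [iSup]
  rw [← h]
  rfl

/-- The norm `‖x‖ = D(x, x₀)` induced by `D(x,y) = sup_c d(c*x, c*y)` is a group norm: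
symmetric under inversion, subadditive, and homogeneous with respect to the dilations. -/
theorem stmt_19 {X : Type*} [Group X] [MetricSpace X] [IsTopologicalGroup X]
    (T : ℝ → X → X)
    (hT : IsDilationFamily (Set.Ici 0) T (1 : X))
    (hhom : ∀ α ∈ Set.Ici (0 : ℝ), ∀ x y : X, T α (x * y) = T α x * T α y)
    (hequi : ∀ x : X, ∀ ε > (0 : ℝ), ∃ δ > (0 : ℝ), ∀ y : X, dist x y < δ →
      ∀ c : X, dist (c * x) (c * y) < ε) :
    (∀ x : X, transDist x⁻¹ (1 : X) = transDist x (1 : X)) ∧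
    (∀ x y : X, transDist (x * y) (1 : X) ≤ transDist x (1 : X) + transDist y (1 : X)) ∧
    (∀ α ∈ Set.Ici (0 : ℝ), ∀ x : X,
      transDist (T α x) (1 : X) = α * transDist x (1 : X)) := by
  obtain ⟨-, hmul, hdist, hfix, hcomp, -⟩ := hT
  have h1 : (1 : ℝ) ∈ Set.Ici (0 : ℝ) := by norm_num
  -- T 1 = id
  have hT1 : ∀ x : X, T 1 x = x := by
    intro x
    have hinj : Function.Injective (T 1) := by
      intro a b hab
      have := hdist 1 h1 a b
      rw [hab] at this
      simpa [dist_eq_zero] using this.symm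
    have : T 1 (T 1 x) = T 1 x := by rw [hcomp 1 h1 1 h1 x, one_mul]
    exact hinj this
  -- for 0 < α, T (1/α) (T α x) = x
  have hinv : ∀ α : ℝ, 0 < α → ∀ x : X, T (1/α) (T α x) = x := by
    intro α hα x
    rw [hcomp (1/α) (le_of_lt (by positivity : (0:ℝ) < 1/α)) α hα.le x, one_div_mul_cancel hα.ne', hT1]
  have hsurj : ∀ α : ℝ, 0 < α → Function.Surjective (T α) := by
    intro α hα c
    refine ⟨T (1/α) c, ?_⟩
    rw [hcomp α hα.le (1/α) (le_of_lt (by positivity : (0:ℝ) < 1/α)) c, mul_one_div_cancel hα.ne', hT1]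
  -- boundedness
  have bdd : ∀ z : X, BddAbove (Set.range fun c : X => dist (c * z) c) := by
    intro z
    obtain ⟨δ, hδ, hδ'⟩ := hequi 1 1 one_pos
    set β : ℝ := min 1 (δ / (dist (1 : X) z + 1)) with hβdef
    have hdz : (0 : ℝ) ≤ dist (1 : X) z := dist_nonneg
    have hβpos : 0 < β := by
      apply lt_min one_pos
      positivity
    have hβsmall : β * dist (1 : X) z < δ := by
      calc β * dist (1 : X) z ≤ (δ / (dist (1 : X) z + 1)) * dist (1 : X) z := by
            apply mul_le_mul_of_nonneg_right (min_le_right _ _) hdz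
        _ < δ := by
            rw [div_mul_eq_mul_div, div_lt_iff₀ (by positivity)]
            nlinarith
    have hTβz : dist (1 : X) (T β z) < δ := by
      have := hdist β hβpos.le 1 z
      rw [hfix β hβpos.le] at this
      rw [this]; exact hβsmall
    have hsmall : ∀ c : X, dist (c * T β z) c < 1 := by
      intro c
      have := hδ' (T β z) (by simpa using hTβz) c
      simpa [mul_one, dist_comm] using this
    refine ⟨1/β, ?_⟩
    rintro r ⟨c, rfl⟩
    show dist (c * z) c ≤ 1/β
    have key : dist (T β c * T β z) (T β c) = β * dist (c * z) c := by
      rw [← hhom β hβpos.le c z, hdist β hβpos.le]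
    have hle : β * dist (c * z) c ≤ 1 := key ▸ (hsmall (T β c)).le
    rw [le_div_iff₀ hβpos]
    linarith
  have bdd' : ∀ z : X, BddAbove (Set.range fun c : X => dist (c * z) (c * 1)) := by
    intro z; simpa [mul_one] using bdd z
  refine ⟨?_, ?_, ?_⟩
  · -- symmetry
    intro x
    unfold transDist
    have := iSup_comp_surj (f := fun c : X => c * x)
      (fun c => ⟨c * x⁻¹, by group⟩) (fun c => dist (c * x⁻¹) (c * 1))
    rw [← this]
    congr 1
    funext c
    simp [mul_assoc, dist_comm]
  · -- triangle
    intro x y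
    unfold transDist
    apply ciSup_le
    intro c
    calc dist (c * (x * y)) (c * 1)
        ≤ dist (c * (x * y)) (c * x) + dist (c * x) (c * 1) := dist_triangle _ _ _
      _ ≤ (⨆ c : X, dist (c * y) (c * 1)) + (⨆ c : X, dist (c * x) (c * 1)) := by
          apply add_le_add
          · have := le_ciSup (bdd' y) (c * x)
            simpa [mul_assoc, mul_one] using this
          · exact le_ciSup (bdd' x) c
      _ = _ := by rw [add_comm]
  · -- homogeneity
    intro α hα x
    rcases eq_or_lt_of_le (Set.mem_Ici.mp hα : (0:ℝ) ≤ α) with rfl | hα'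
    · have hT0 : T 0 x = 1 := by
        have := hdist 0 Set.self_mem_Ici x 1
        rw [hfix 0 Set.self_mem_Ici, zero_mul, dist_eq_zero] at this
        exact this
      simp [hT0, transDist, mul_one, zero_mul]
    · unfold transDist
      rw [Real.mul_iSup_of_nonneg hα]
      rw [← iSup_comp_surj (hsurj α hα') (fun c => dist (c * T α x) (c * 1))]
      congr 1
      funext c
      rw [mul_one, ← hhom α hα c x, hdist α hα, mul_one]
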